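/- arXiv:1710.02063 — 2 statements merged into one kernel-verified Lean document; each statement's English description precedes it below -/
import Mathlib

section
/- If there exists a c-compatible order of A_c, then the factorization poset P_c is locally Hurwitz-connected, i.e., for every g ≤_A c with ℓ_A(g) = 2 the braid group B₂ acts transitively on Red_A(g). -/
variable {G : Type*} [Group G]

/-- `A` generates `G` as a monoid. -/
def GeneratesM (A : Set G) : Prop :=
  ∀ x : G, ∃ l : List G, (∀ a ∈ l, a ∈ A) ∧ l.prod = x

/-- `A` is closed under `G`-conjugation. -/
def ConjClosed (A : Set G) : Prop :=
  ∀ g a : G, a ∈ A → g * a * g⁻¹ ∈ A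

/-- The `A`-length of `x`: minimal number of factors from `A` needed to write `x`. -/
noncomputable def lenA (A : Set G) (x : G) : ℕ :=
  sInf {n : ℕ | ∃ l : List G, (∀ a ∈ l, a ∈ A) ∧ l.prod = x ∧ l.length = n}

/-- The `A`-prefix order. -/
def leA (A : Set G) (x y : G) : Prop :=
  lenA A x + lenA A (x⁻¹ * y) = lenA A y

/-- The set of reduced `A`-factorizations of `x`, as lists. -/
def RedA (A : Set G) (x : G) : Set (List G) :=
  {l : List G | (∀ a ∈ l, a ∈ A) ∧ l.prod = x ∧ l.length = lenA A x}

/-- `A_c`: the generators occurring below `c`. -/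
def Ac (A : Set G) (c : G) : Set G := {a : G | a ∈ A ∧ leA A a c}

/-- A single Hurwitz move on factorizations. -/
def HurwitzMove : List G → List G → Prop := fun l m =>
  ∃ (p s : List G) (a b : G),
    l = p ++ a :: b :: s ∧ m = p ++ b :: (b⁻¹ * a * b) :: s

/-- `r` is a linear order on the set `S`. -/
def IsLinearOrderOn (S : Set G) (r : G → G → Prop) : Prop :=
  (∀ a ∈ S, r a a) ∧
  (∀ a ∈ S, ∀ b ∈ S, r a b → r b a → a = b) ∧
  (∀ a ∈ S, ∀ b ∈ S, ∀ c ∈ S, r a b → r b c → r a c) ∧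
  (∀ a ∈ S, ∀ b ∈ S, r a b ∨ r b a)

/-- `r` is a `c`-compatible order: every length-2 element below `c` has a unique
rising reduced factorization. -/
def CompatibleOrder (A : Set G) (c : G) (r : G → G → Prop) : Prop :=
  ∀ g : G, leA A g c → lenA A g = 2 →
    ∃! l : List G, l ∈ RedA A g ∧ l.Chain' r

/-- Two factorizations correspond to maximal chains differing in exactly one element. -/
def ChainAdj (l m : List G) : Prop :=
  l ≠ m ∧ ∃ (p s : List G) (a b a' b' : G),
    l = p ++ a :: b :: s ∧ m = p ++ a' :: b' :: s ∧ a * b = a' * b'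

/-- Covering relation in the graded factorization poset. -/
def CoversA (A : Set G) (x y : G) : Prop := leA A x y ∧ lenA A y = lenA A x + 1

/-- `F_≺(a; g)`: upper covers of the atom `a` in `P_g` that also cover a strictly
smaller atom. -/
def Fset (A : Set G) (r : G → G → Prop) (a g : G) : Set G :=
  {h : G | CoversA A a h ∧ leA A h g ∧
    ∃ a' ∈ A, a' ≠ a ∧ r a' a ∧ CoversA A a' h}

/-- `P_c` is well-covered with respect to `r`. -/
def WellCovered (A : Set G) (c : G) (r : G → G → Prop) : Prop :=
  ∀ a ∈ A, leA A a c →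
    (Fset A r a c = ∅ ↔ ∀ b ∈ A, leA A b c → r a b)

/-- `P_c` is totally well-covered with respect to `r`. -/
def TotallyWellCovered (A : Set G) (c : G) (r : G → G → Prop) : Prop :=
  ∀ g : G, leA A g c → WellCovered A g r

theorem redA_nonempty' (A : Set G) (hgen : GeneratesM A) (x : G) : ∃ l, l ∈ RedA A x := by
  have hne : {n : ℕ | ∃ l : List G, (∀ a ∈ l, a ∈ A) ∧ l.prod = x ∧ l.length = n}.Nonempty := by
    obtain ⟨l, h1, h2⟩ := hgen x
    exact ⟨l.length, l, h1, h2, rfl⟩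
  obtain ⟨l, h1, h2, h3⟩ := Nat.sInf_mem hne
  exact ⟨l, h1, h2, h3⟩

theorem lenA_le_length' (A : Set G) {x : G} {l : List G} (h : ∀ a ∈ l, a ∈ A)
    (hp : l.prod = x) : lenA A x ≤ l.length :=
  Nat.sInf_le ⟨l, h, hp, rfl⟩

theorem lenA_mul_le' (A : Set G) (hgen : GeneratesM A) (x y : G) :
    lenA A (x * y) ≤ lenA A x + lenA A y := by
  obtain ⟨lx, hx1, hx2, hx3⟩ := redA_nonempty' A hgen x
  obtain ⟨ly, hy1, hy2, hy3⟩ := redA_nonempty' A hgen y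
  have := lenA_le_length' A (x := x * y) (l := lx ++ ly)
    (by intro a ha; rcases List.mem_append.mp ha with h | h; exacts [hx1 a h, hy1 a h])
    (by rw [List.prod_append, hx2, hy2])
  simpa [hx3, hy3] using this

theorem leA_trans' (A : Set G) (hgen : GeneratesM A) {x y z : G}
    (hxy : leA A x y) (hyz : leA A y z) : leA A x z := by
  have h1 : lenA A (x⁻¹ * z) ≤ lenA A (x⁻¹ * y) + lenA A (y⁻¹ * z) := by
    have := lenA_mul_le' A hgen (x⁻¹ * y) (y⁻¹ * z)
    simpa [mul_assoc] using this
  have h2 : lenA A z ≤ lenA A x + lenA A (x⁻¹ * z) := by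
    have := lenA_mul_le' A hgen x (x⁻¹ * z)
    simpa using this
  unfold leA at *
  omega

theorem lenA_eq_zero' (A : Set G) (hgen : GeneratesM A) {x : G}
    (h : lenA A x = 0) : x = 1 := by
  obtain ⟨l, _, h2, h3⟩ := redA_nonempty' A hgen x
  rw [h, List.length_eq_zero_iff] at h3
  subst h3; simpa using h2.symm

/-- Analysis of a length-two reduced factorization. -/
theorem pair_mem' (A : Set G) (hgen : GeneratesM A) (hconj : ConjClosed A) {g a b : G}
    (hg2 : lenA A g = 2) (h : [a, b] ∈ RedA A g) :
    a ∈ A ∧ b ∈ A ∧ a * b = g ∧ lenA A a = 1 ∧ lenA A b = 1 ∧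
      leA A a g ∧ leA A b g := by
  obtain ⟨hmem, hprod, _⟩ := h
  have haA : a ∈ A := hmem a (by simp)
  have hbA : b ∈ A := hmem b (by simp)
  have hab : a * b = g := by simpa using hprod
  have ha1 : lenA A a ≤ 1 := lenA_le_length' A (l := [a]) (by simpa using haA) (by simp)
  have hb1 : lenA A b ≤ 1 := lenA_le_length' A (l := [b]) (by simpa using hbA) (by simp)
  have hsum : lenA A g ≤ lenA A a + lenA A b := hab ▸ lenA_mul_le' A hgen a b
  have ha : lenA A a = 1 := by omega
  have hb : lenA A b = 1 := by omega
  refine ⟨haA, hbA, hab, ha, hb, ?_, ?_⟩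
  · unfold leA
    have : a⁻¹ * g = b := by rw [← hab]; group
    rw [this, ha, hb, hg2]
  · unfold leA
    have hbg : b⁻¹ * g = b⁻¹ * a * b := by rw [← hab]; group
    have hcA : b⁻¹ * a * b ∈ A := by simpa using hconj b⁻¹ a haA
    have hle : lenA A (b⁻¹ * g) ≤ 1 := by
      rw [hbg]
      exact lenA_le_length' A (l := [b⁻¹ * a * b]) (by simpa using hcA) (by simp)
    have hge : lenA A g ≤ lenA A b + lenA A (b⁻¹ * g) := by
      have := lenA_mul_le' A hgen b (b⁻¹ * g)
      simpa using this
    omega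

theorem ac_finite' (A : Set G) (hgen : GeneratesM A) {c : G}
    (hfin : (RedA A c).Finite) : (Ac A c).Finite := by
  have hsub : Ac A c ⊆ insert (1 : G) ((fun l : List G => l.getD 0 1) '' RedA A c) := by
    rintro a ⟨haA, hac⟩
    by_cases h0 : lenA A a = 0
    · exact Set.mem_insert_iff.mpr (Or.inl (lenA_eq_zero' A hgen h0))
    · have ha1 : lenA A a = 1 := by
        have := lenA_le_length' A (x := a) (l := [a]) (by simpa using haA) (by simp)
        simp at this; omega
      obtain ⟨m, hm1, hm2, hm3⟩ := redA_nonempty' A hgen (a⁻¹ * c)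
      have hmem : (a :: m) ∈ RedA A c := by
        refine ⟨?_, ?_, ?_⟩
        · intro x hx
          rcases List.mem_cons.mp hx with h | h
          · subst h; exact haA
          · exact hm1 x h
        · rw [List.prod_cons, hm2]; group
        · have : lenA A a + lenA A (a⁻¹ * c) = lenA A c := hac
          simp [hm3, ha1]
          omega
      exact Set.mem_insert_iff.mpr (Or.inr ⟨a :: m, hmem, rfl⟩)
  exact ((hfin.image _).insert 1).subset hsub

theorem compatible_implies_locally_hurwitz_connected (A : Set G)
    (hgen : GeneratesM A) (hconj : ConjClosed A) (c : G)
    (hfin : (RedA A c).Finite)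
    (hex : ∃ r : G → G → Prop, IsLinearOrderOn (Ac A c) r ∧ CompatibleOrder A c r) :
    ∀ g : G, leA A g c → lenA A g = 2 →
      ∀ l ∈ RedA A g, ∀ m ∈ RedA A g, Relation.EqvGen HurwitzMove l m := by
  obtain ⟨r, ⟨hrefl, hanti, htrans, htot⟩, hcomp⟩ := hex
  intro g hgc hg2 l hl m hm
  obtain ⟨l₀, ⟨hl₀mem, hl₀chain⟩, huniq⟩ := hcomp g hgc hg2
  have hacfin := ac_finite' A hgen hfin
  -- every pair in Red_A g has both entries in Ac A c
  have hAc : ∀ a b : G, [a, b] ∈ RedA A g → a ∈ Ac A c ∧ b ∈ Ac A c := by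
    intro a b hab
    obtain ⟨haA, hbA, _, _, _, hag, hbg⟩ := pair_mem' A hgen hconj hg2 hab
    exact ⟨⟨haA, leA_trans' A hgen hag hgc⟩, ⟨hbA, leA_trans' A hgen hbg hgc⟩⟩
  -- Hurwitz step stays in Red_A g
  have hstep : ∀ a b : G, [a, b] ∈ RedA A g → [b, b⁻¹ * a * b] ∈ RedA A g := by
    intro a b hab
    obtain ⟨haA, hbA, hprod, _, _, _, _⟩ := pair_mem' A hgen hconj hg2 hab
    obtain ⟨_, _, hlen⟩ := hab
    refine ⟨?_, ?_, by simpa using hlen⟩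
    · intro x hx
      rcases List.mem_cons.mp hx with h | h
      · subst h; exact hbA
      · rcases List.mem_cons.mp h with h | h
        · subst h; simpa using hconj b⁻¹ a haA
        · simp at h
    · rw [← hprod]; simp; group
  -- descent claim, by induction on a cardinality measure
  have claim : ∀ n : ℕ, ∀ a b : G, [a, b] ∈ RedA A g →
      {x | x ∈ Ac A c ∧ r x a ∧ x ≠ a}.ncard ≤ n →
      Relation.EqvGen HurwitzMove [a, b] l₀ := by
    intro n
    induction n with
    | zero =>
      intro a b hab hcard
      obtain ⟨haAc, hbAc⟩ := hAc a b hab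
      by_cases hr : r a b
      · have : [a, b] = l₀ := huniq [a, b] ⟨hab, List.isChain_pair.mpr hr⟩
        rw [this]; exact Relation.EqvGen.refl _
      · have hba : r b a := (htot a haAc b hbAc).resolve_left hr
        have hne : b ≠ a := by
          rintro rfl; exact hr hba
        have hbS : b ∈ {x | x ∈ Ac A c ∧ r x a ∧ x ≠ a} := ⟨hbAc, hba, hne⟩
        have hSfin : {x | x ∈ Ac A c ∧ r x a ∧ x ≠ a}.Finite :=
          hacfin.subset (fun x hx => hx.1)
        have := Set.ncard_pos hSfin |>.mpr ⟨b, hbS⟩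
        omega
    | succ n ih =>
      intro a b hab hcard
      obtain ⟨haAc, hbAc⟩ := hAc a b hab
      by_cases hr : r a b
      · have : [a, b] = l₀ := huniq [a, b] ⟨hab, List.isChain_pair.mpr hr⟩
        rw [this]; exact Relation.EqvGen.refl _
      · have hba : r b a := (htot a haAc b hbAc).resolve_left hr
        have hne : b ≠ a := by rintro rfl; exact hr hba
        have hmem' : [b, b⁻¹ * a * b] ∈ RedA A g := hstep a b hab
        have hmove : HurwitzMove [a, b] [b, b⁻¹ * a * b] :=
          ⟨[], [], a, b, by simp, by simp⟩
        -- measure decreases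
        have hSsub : {x | x ∈ Ac A c ∧ r x b ∧ x ≠ b} ⊆
            {x | x ∈ Ac A c ∧ r x a ∧ x ≠ a} \ {b} := by
          rintro x ⟨hxAc, hxb, hxne⟩
          refine ⟨⟨hxAc, htrans x hxAc b hbAc a haAc hxb hba, ?_⟩, hxne⟩
          rintro rfl
          exact hr hxb
        have hSafin : ({x | x ∈ Ac A c ∧ r x a ∧ x ≠ a}).Finite :=
          hacfin.subset (fun x hx => hx.1)
        have hbS : b ∈ {x | x ∈ Ac A c ∧ r x a ∧ x ≠ a} := ⟨hbAc, hba, hne⟩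
        have h1 : {x | x ∈ Ac A c ∧ r x b ∧ x ≠ b}.ncard ≤
            ({x | x ∈ Ac A c ∧ r x a ∧ x ≠ a} \ {b}).ncard :=
          Set.ncard_le_ncard hSsub (hSafin.subset Set.diff_subset)
        have h2 : ({x | x ∈ Ac A c ∧ r x a ∧ x ≠ a} \ {b}).ncard <
            {x | x ∈ Ac A c ∧ r x a ∧ x ≠ a}.ncard :=
          Set.ncard_diff_singleton_lt_of_mem hbS hSafin
        exact Relation.EqvGen.trans _ _ _ (Relation.EqvGen.rel _ _ hmove)
          (ih b (b⁻¹ * a * b) hmem' (by omega))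
  -- reduce arbitrary elements of Red_A g to pairs
  have hpairform : ∀ l' ∈ RedA A g, ∃ a b : G, l' = [a, b] := by
    intro l' hl'
    obtain ⟨_, _, hlen⟩ := hl'
    rw [hg2] at hlen
    match l', hlen with
    | [a, b], _ => exact ⟨a, b, rfl⟩
  obtain ⟨a, b, rfl⟩ := hpairform l hl
  obtain ⟨a', b', rfl⟩ := hpairform m hm
  have h1 := claim _ a b hl le_rfl
  have h2 := claim _ a' b' hm le_rfl
  exact Relation.EqvGen.trans _ _ _ h1 (Relation.EqvGen.symm _ _ h2)
end

section
/- If ℓ_A(c) = 2 and Red_A(c) is finite, then there exists a c-compatible order of A_c if and only if the Hurwitz action of B₂ on Red_A(c) is transitive. -/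
variable {G : Type*} [Group G]

-- auxiliary development
def phiH (c : G) : G → G := fun z => z⁻¹ * c

lemma phiH_inj (c : G) : Function.Injective (phiH c) := by
  intro a b h
  simpa [phiH] using mul_right_cancel h

def Sc (A : Set G) (c : G) : Set G := {a | a ∈ A ∧ a⁻¹ * c ∈ A}

lemma lenA_le (A : Set G) {x : G} {l : List G} (hl : ∀ a ∈ l, a ∈ A) (hp : l.prod = x) :
    lenA A x ≤ l.length := Nat.sInf_le ⟨l, hl, hp, rfl⟩

lemma lenA_spec (A : Set G) (hgen : GeneratesM A) (x : G) :
    ∃ l : List G, (∀ a ∈ l, a ∈ A) ∧ l.prod = x ∧ l.length = lenA A x := by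
  obtain ⟨l, hl, hp⟩ := hgen x
  have hne : {n : ℕ | ∃ l : List G, (∀ a ∈ l, a ∈ A) ∧ l.prod = x ∧ l.length = n}.Nonempty :=
    ⟨l.length, l, hl, hp, rfl⟩
  exact Nat.sInf_mem hne

lemma lenA_one (A : Set G) : lenA A 1 = 0 :=
  Nat.le_zero.mp (lenA_le A (l := []) (by simp) (by simp))

lemma eq_one_of_lenA_eq_zero {A : Set G} (hgen : GeneratesM A) {x : G}
    (h : lenA A x = 0) : x = 1 := by
  obtain ⟨l, _, hp, hlen⟩ := lenA_spec A hgen x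
  rw [h, List.length_eq_zero_iff] at hlen
  simpa [hlen] using hp.symm

lemma lenA_of_mem {A : Set G} (hgen : GeneratesM A) {a : G} (ha : a ∈ A) (hne : a ≠ 1) :
    lenA A a = 1 := by
  have h1 : lenA A a ≤ 1 := lenA_le A (l := [a]) (by simp [ha]) (by simp)
  have h0 : lenA A a ≠ 0 := fun h => hne (eq_one_of_lenA_eq_zero hgen h)
  omega

lemma leA_self (A : Set G) (c : G) : leA A c c := by
  simp [leA, lenA_one]

lemma mem_RedA_iff {A : Set G} {c : G} (h2 : lenA A c = 2) {l : List G} :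
    l ∈ RedA A c ↔ ∃ a ∈ Sc A c, l = [a, a⁻¹ * c] := by
  constructor
  · rintro ⟨hmem, hprod, hlen⟩
    rw [h2, List.length_eq_two] at hlen
    obtain ⟨a, b, rfl⟩ := hlen
    have hab : a * b = c := by simpa using hprod
    have hb : b = a⁻¹ * c := by rw [← hab]; group
    subst hb
    exact ⟨a, ⟨hmem a (by simp), hmem (a⁻¹ * c) (by simp)⟩, rfl⟩
  · rintro ⟨a, ⟨ha, hac⟩, rfl⟩
    refine ⟨?_, by simp, by simp [h2]⟩
    intro x hx
    simp at hx
    rcases hx with rfl | rfl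
    · exact ha
    · exact hac

lemma one_not_mem_Sc {A : Set G} {c : G} (h2 : lenA A c = 2) : (1 : G) ∉ Sc A c := by
  rintro ⟨-, hc⟩
  simp at hc
  have : lenA A c ≤ List.length [c] := lenA_le A (l := [c]) (by simp [hc]) (by simp)
  simp at this
  omega

lemma Sc_phi {A : Set G} (hconj : ConjClosed A) {c a : G} (ha : a ∈ Sc A c) :
    a⁻¹ * c ∈ Sc A c := by
  refine ⟨ha.2, ?_⟩
  have := hconj c⁻¹ a ha.1
  rw [inv_inv] at this
  convert this using 1
  group

lemma Sc_pre {A : Set G} (hconj : ConjClosed A) {c a : G} (ha : a ∈ Sc A c) :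
    c * a⁻¹ ∈ Sc A c := by
  constructor
  · have := hconj a (a⁻¹ * c) ha.2
    convert this using 1
    group
  · convert ha.1 using 1
    group

lemma Sc_subset_Ac {A : Set G} (hgen : GeneratesM A) {c : G} (h2 : lenA A c = 2) :
    Sc A c ⊆ Ac A c := by
  rintro a ⟨ha, hac⟩
  have hcA : c ∉ A := by
    intro hc
    have : lenA A c ≤ List.length [c] := lenA_le A (l := [c]) (by simp [hc]) (by simp)
    simp at this
    omega
  have hane : a ≠ 1 := by rintro rfl; simp at hac; exact hcA hac
  have hacne : a⁻¹ * c ≠ 1 := by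
    intro h
    rw [inv_mul_eq_one] at h
    exact hcA (h ▸ ha)
  refine ⟨ha, ?_⟩
  unfold leA
  rw [lenA_of_mem hgen ha hane, lenA_of_mem hgen hac hacne, h2]

lemma Sc_finite {A : Set G} {c : G} (h2 : lenA A c = 2) (hfin : (RedA A c).Finite) :
    (Sc A c).Finite := by
  have himg : (fun a => [a, a⁻¹ * c]) '' Sc A c ⊆ RedA A c := by
    rintro - ⟨a, ha, rfl⟩
    exact (mem_RedA_iff h2).2 ⟨a, ha, rfl⟩
  apply Set.Finite.of_finite_image (hfin.subset himg)
  intro a _ b _ h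
  simp only [List.cons.injEq] at h
  exact h.1

lemma Sc_nonempty {A : Set G} (hgen : GeneratesM A) {c : G} (h2 : lenA A c = 2) :
    (Sc A c).Nonempty := by
  obtain ⟨l, hl, hp, hlen⟩ := lenA_spec A hgen c
  rw [h2, List.length_eq_two] at hlen
  obtain ⟨a, b, rfl⟩ := hlen
  have hab : a * b = c := by simpa using hp
  refine ⟨a, hl a (by simp), ?_⟩
  rw [← hab]
  simpa using hl b (by simp)

def HRel (c : G) (x y : G) : Prop := ∃ j k : ℕ, (phiH c)^[j] x = (phiH c)^[k] y

lemma HRel.symm' {c x y : G} (h : HRel c x y) : HRel c y x := by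
  obtain ⟨j, k, h⟩ := h; exact ⟨k, j, h.symm⟩

lemma HRel.trans' {c x y z : G} (h1 : HRel c x y) (h2 : HRel c y z) : HRel c x z := by
  obtain ⟨j, k, h1⟩ := h1
  obtain ⟨j', k', h2⟩ := h2
  refine ⟨j' + j, k + k', ?_⟩
  calc (phiH c)^[j' + j] x = (phiH c)^[j'] ((phiH c)^[j] x) := Function.iterate_add_apply _ _ _ _
    _ = (phiH c)^[j'] ((phiH c)^[k] y) := by rw [h1]
    _ = (phiH c)^[j' + k] y := (Function.iterate_add_apply _ _ _ _).symm
    _ = (phiH c)^[k + j'] y := by rw [Nat.add_comm]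
    _ = (phiH c)^[k] ((phiH c)^[j'] y) := Function.iterate_add_apply _ _ _ _
    _ = (phiH c)^[k] ((phiH c)^[k'] z) := by rw [h2]
    _ = (phiH c)^[k + k'] z := (Function.iterate_add_apply _ _ _ _).symm

lemma hurwitz_two {l m : List G} (h : HurwitzMove l m) (hl : l.length = 2) :
    ∃ a b : G, l = [a, b] ∧ m = [b, b⁻¹ * a * b] := by
  obtain ⟨p, s, a, b, rfl, rfl⟩ := h
  simp at hl
  obtain ⟨hp, hs⟩ : p = [] ∧ s = [] := by
    constructor <;> [skip; skip] <;> rw [← List.length_eq_zero_iff] <;> omega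
  subst hp; subst hs
  exact ⟨a, b, rfl, rfl⟩

lemma eqvgen_form {c : G} {l m : List G} (h : Relation.EqvGen HurwitzMove l m) :
    (∀ x : G, l = [x, x⁻¹ * c] → ∃ y, m = [y, y⁻¹ * c] ∧ HRel c x y) ∧
    (∀ y : G, m = [y, y⁻¹ * c] → ∃ x, l = [x, x⁻¹ * c] ∧ HRel c x y) := by
  induction h with
  | rel l m h =>
    constructor
    · rintro x rfl
      obtain ⟨a, b, hab, hm⟩ := hurwitz_two h (by simp)
      injection hab with h1 h2
      injection h2 with h2 _
      subst h1
      subst h2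
      have hcalc : (x⁻¹ * c)⁻¹ * x * (x⁻¹ * c) = (x⁻¹ * c)⁻¹ * c := by group
      refine ⟨x⁻¹ * c, ?_, 1, 0, by simp [phiH]⟩
      rw [hm, hcalc]
    · rintro y rfl
      obtain ⟨p, s, a, b, hl', hm⟩ := h
      have hlen2 : (p ++ b :: (b⁻¹ * a * b) :: s).length = 2 := by rw [← hm]; simp
      simp at hlen2
      obtain ⟨hp, hs⟩ : p = [] ∧ s = [] := by
        constructor <;> rw [← List.length_eq_zero_iff] <;> omega
      subst hp; subst hs
      simp only [List.nil_append] at hl' hm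
      injection hm with hy hm2
      injection hm2 with hm2 _
      subst hy
      have h3 : a * y = c := by
        have h4 := hm2.symm
        rw [mul_assoc] at h4
        exact mul_left_cancel h4
      have ha : a = c * y⁻¹ := by rw [← h3]; group
      have hxy : (c * y⁻¹)⁻¹ * c = y := by group
      refine ⟨c * y⁻¹, ?_, 1, 0, ?_⟩
      · rw [hl', ha, hxy]
      · simp only [Function.iterate_one, Function.iterate_zero, id_eq, phiH]
        exact hxy
  | refl l =>
    exact ⟨fun x hx => ⟨x, hx, 0, 0, rfl⟩, fun y hy => ⟨y, hy, 0, 0, rfl⟩⟩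
  | symm l m h ih =>
    exact ⟨fun x hx => (ih.2 x hx).imp (fun y hy => ⟨hy.1, hy.2.symm'⟩),
           fun y hy => (ih.1 y hy).imp (fun x hx => ⟨hx.1, hx.2.symm'⟩)⟩
  | trans l m n h1 h2 ih1 ih2 =>
    constructor
    · intro x hx
      obtain ⟨y, hy, hr⟩ := ih1.1 x hx
      obtain ⟨z, hz, hr'⟩ := ih2.1 y hy
      exact ⟨z, hz, hr.trans' hr'⟩
    · intro z hz
      obtain ⟨y, hy, hr⟩ := ih2.2 z hz
      obtain ⟨x, hx, hr'⟩ := ih1.2 y hy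
      exact ⟨x, hx, hr'.trans' hr⟩

lemma exists_max {S : Set G} {r : G → G → Prop}
    (hrefl : ∀ a ∈ S, r a a)
    (htrans : ∀ a ∈ S, ∀ b ∈ S, ∀ c ∈ S, r a b → r b c → r a c)
    (htot : ∀ a ∈ S, ∀ b ∈ S, r a b ∨ r b a)
    (T : Set G) (hTS : T ⊆ S) (hfin : T.Finite) (hne : T.Nonempty) :
    ∃ m ∈ T, ∀ x ∈ T, r x m := by
  classical
  have aux : ∀ t : Finset G, ↑t ⊆ S → t.Nonempty → ∃ m ∈ t, ∀ x ∈ t, r x m := by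
    intro t
    induction t using Finset.induction_on with
    | empty => intro _ h; exact absurd h (by simp)
    | @insert a t ha ih =>
      intro hsub _
      have haS : a ∈ S := hsub (by simp)
      have htsub : ↑t ⊆ S := fun x hx => hsub (by simp [hx])
      by_cases hte : t.Nonempty
      · obtain ⟨m, hm, hmax⟩ := ih htsub hte
        have hmS : m ∈ S := htsub hm
        rcases htot a haS m hmS with hr | hr
        · refine ⟨m, by simp [hm], ?_⟩
          intro x hx
          rcases Finset.mem_insert.mp hx with rfl | hx
          · exact hr
          · exact hmax x hx
        · refine ⟨a, by simp, ?_⟩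
          intro x hx
          rcases Finset.mem_insert.mp hx with rfl | hx
          · exact hrefl _ haS
          · exact htrans x (htsub hx) m hmS a haS (hmax x hx) hr
      · rw [Finset.not_nonempty_iff_eq_empty] at hte
        subst hte
        exact ⟨a, by simp, by intro x hx; simp at hx; subst hx; exact hrefl _ haS⟩
  obtain ⟨m, hm, hmax⟩ := aux hfin.toFinset (by simpa using hTS)
    (by simpa [Set.Finite.toFinset] using hne)
  exact ⟨m, by simpa using hm, fun x hx => hmax x (by simpa using hx)⟩

lemma mem_Sc_of_mem_Ac {A : Set G} (hgen : GeneratesM A) {c a : G}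
    (h2 : lenA A c = 2) (ha : a ∈ Ac A c) (hne : a ≠ 1) : a ∈ Sc A c := by
  obtain ⟨haA, hle⟩ := ha
  have h1 : lenA A a = 1 := lenA_of_mem hgen haA hne
  have hlac : lenA A (a⁻¹ * c) = 1 := by unfold leA at hle; omega
  obtain ⟨l, hl, hp, hlen⟩ := lenA_spec A hgen (a⁻¹ * c)
  rw [hlac, List.length_eq_one_iff] at hlen
  obtain ⟨b, rfl⟩ := hlen
  have hb : b = a⁻¹ * c := by simpa using hp
  exact ⟨haA, hb ▸ hl b (by simp)⟩

theorem compatible_iff_hurwitz_transitive_rank_two (A : Set G)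
    (hgen : GeneratesM A) (hconj : ConjClosed A) (c : G)
    (h2 : lenA A c = 2) (hfin : (RedA A c).Finite) :
    (∃ r : G → G → Prop, IsLinearOrderOn (Ac A c) r ∧ CompatibleOrder A c r) ↔
      (∀ l ∈ RedA A c, ∀ m ∈ RedA A c, Relation.EqvGen HurwitzMove l m) := by
  classical
  constructor
  · rintro ⟨r, ⟨hrefl, hanti, htrans, htot⟩, hcomp⟩ l hl m hm
    have key : ∀ l₀ ∈ RedA A c, ∃ a ∈ Sc A c,
        Relation.EqvGen HurwitzMove [a, a⁻¹ * c] l₀ ∧ r a (a⁻¹ * c) := by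
      intro l₀ hl₀
      obtain ⟨x₀, hx₀, rfl⟩ := (mem_RedA_iff h2).1 hl₀
      set T : Set G :=
        {a | a ∈ Sc A c ∧ Relation.EqvGen HurwitzMove [a, a⁻¹ * c] [x₀, x₀⁻¹ * c]} with hT
      have hTS : T ⊆ Ac A c := fun a ha => Sc_subset_Ac hgen h2 ha.1
      have hTfin : T.Finite := (Sc_finite h2 hfin).subset (fun a ha => ha.1)
      have hTne : T.Nonempty := ⟨x₀, hx₀, Relation.EqvGen.refl _⟩
      obtain ⟨mx, hmx, hmax⟩ := exists_max hrefl htrans htot T hTS hTfin hTne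
      have hmxS : mx ∈ Sc A c := hmx.1
      have ha'' : c * mx⁻¹ ∈ Sc A c := Sc_pre hconj hmxS
      have key2 : (c * mx⁻¹)⁻¹ * c = mx := by group
      have hmove : HurwitzMove [c * mx⁻¹, (c * mx⁻¹)⁻¹ * c] [mx, mx⁻¹ * c] := by
        refine ⟨[], [], c * mx⁻¹, (c * mx⁻¹)⁻¹ * c, rfl, ?_⟩
        simp only [List.nil_append, List.cons.injEq]
        exact ⟨by group, by group, trivial⟩
      have ha''T : c * mx⁻¹ ∈ T :=
        ⟨ha'', Relation.EqvGen.trans _ _ _ (Relation.EqvGen.rel _ _ hmove) hmx.2⟩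
      refine ⟨c * mx⁻¹, ha'', ha''T.2, ?_⟩
      rw [key2]
      exact hmax _ ha''T
    obtain ⟨a1, ha1S, he1, hr1⟩ := key l hl
    obtain ⟨a2, ha2S, he2, hr2⟩ := key m hm
    obtain ⟨u, hu, huniq⟩ := hcomp c (leA_self A c) h2
    have e1 : [a1, a1⁻¹ * c] = u :=
      huniq _ ⟨(mem_RedA_iff h2).2 ⟨a1, ha1S, rfl⟩, List.isChain_pair.mpr hr1⟩
    have e2 : [a2, a2⁻¹ * c] = u :=
      huniq _ ⟨(mem_RedA_iff h2).2 ⟨a2, ha2S, rfl⟩, List.isChain_pair.mpr hr2⟩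
    have h12 : [a1, a1⁻¹ * c] = [a2, a2⁻¹ * c] := e1.trans e2.symm
    exact Relation.EqvGen.trans _ _ _ (Relation.EqvGen.symm _ _ he1) (h12 ▸ he2)
  · intro htriv
    obtain ⟨a₀, ha₀⟩ := Sc_nonempty hgen h2
    have hiter : ∀ k, (phiH c)^[k] a₀ ∈ Sc A c := by
      intro k
      induction k with
      | zero => simpa using ha₀
      | succ n ih => rw [Function.iterate_succ_apply']; exact Sc_phi hconj ih
    have hnot1 : ∀ k, (phiH c)^[k] a₀ ≠ 1 := fun k h => one_not_mem_Sc h2 (h ▸ hiter k)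
    have hR : ∀ a ∈ Sc A c, HRel c a₀ a := by
      intro a ha
      have h1 := (mem_RedA_iff h2).2 ⟨a₀, ha₀, rfl⟩
      have h2' := (mem_RedA_iff h2).2 ⟨a, ha, rfl⟩
      obtain ⟨y, hy, hr⟩ := (eqvgen_form (htriv _ h1 _ h2')).1 a₀ rfl
      have hya : y = a := by injection hy with h _; exact h.symm
      exact hya ▸ hr
    have hfinS := Sc_finite h2 hfin
    have hcancel : ∀ i d : ℕ, (phiH c)^[i + d] a₀ = (phiH c)^[i] a₀ →
        (phiH c)^[d] a₀ = a₀ := by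
      intro i d h
      have hinj : Function.Injective ((phiH c)^[i]) := Function.Injective.iterate (phiH_inj c) i
      apply hinj
      rw [← Function.iterate_add_apply]
      exact h
    have hperiod : ∃ p, 0 < p ∧ (phiH c)^[p] a₀ = a₀ := by
      have hni : ¬ Function.Injective (fun k : ℕ => (phiH c)^[k] a₀) := by
        intro hinj
        exact (hfinS.subset (Set.range_subset_iff.2 hiter)).not_infinite
          (Set.infinite_range_of_injective hinj)
      obtain ⟨i, j, hij, hne⟩ := Function.not_injective_iff.mp hni
      rcases Nat.lt_or_ge i j with h | h
      · exact ⟨j - i, by omega,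
          hcancel i (j - i) (by rw [Nat.add_sub_cancel' h.le]; exact hij.symm)⟩
      · have h' : j < i := by omega
        exact ⟨i - j, by omega,
          hcancel j (i - j) (by rw [Nat.add_sub_cancel' h'.le]; exact hij)⟩
    set p := Nat.find hperiod with hpdef
    have hp := Nat.find_spec hperiod
    have hpmul : ∀ q, (phiH c)^[p * q] a₀ = a₀ := by
      intro q
      induction q with
      | zero => simp
      | succ n ih => rw [Nat.mul_succ, Function.iterate_add_apply, hp.2]; exact ih
    have hidx : ∀ a ∈ Sc A c, ∃ k, k < p ∧ (phiH c)^[k] a₀ = a := by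
      intro a ha
      obtain ⟨j, k, hjk⟩ := hR a ha
      have hle : k ≤ j + k * p := by nlinarith [hp.1]
      have h1 : (phiH c)^[j + k * p] a₀ = (phiH c)^[k] a := by
        rw [Function.iterate_add_apply, show k * p = p * k from Nat.mul_comm k p, hpmul k]
        exact hjk
      have h2' : (phiH c)^[k + (j + k * p - k)] a₀ = (phiH c)^[k] a := by
        rw [Nat.add_sub_cancel' hle]; exact h1
      rw [Function.iterate_add_apply] at h2'
      have hda : (phiH c)^[j + k * p - k] a₀ = a :=
        Function.Injective.iterate (phiH_inj c) k h2'
      set d := j + k * p - k with hd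
      have hred : (phiH c)^[d] a₀ = (phiH c)^[d % p] a₀ := by
        conv_lhs => rw [← Nat.mod_add_div d p]
        rw [Function.iterate_add_apply, hpmul (d / p)]
      exact ⟨d % p, Nat.mod_lt _ hp.1, by rw [← hred]; exact hda⟩
    have hdist : ∀ i j, i < p → j < p →
        (phiH c)^[i] a₀ = (phiH c)^[j] a₀ → i = j := by
      intro i j hi hj hij
      by_contra hne
      rcases Nat.lt_or_ge i j with h | h
      · have hper := hcancel i (j - i) (by rw [Nat.add_sub_cancel' h.le]; exact hij.symm)
        exact Nat.find_min hperiod (show j - i < p by omega) ⟨by omega, hper⟩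
      · have h' : j < i := by omega
        have hper := hcancel j (i - j) (by rw [Nat.add_sub_cancel' h'.le]; exact hij)
        exact Nat.find_min hperiod (show i - j < p by omega) ⟨by omega, hper⟩
    have hmemSc : ∀ a ∈ Ac A c, a ≠ 1 → a ∈ Sc A c := by
      intro a ha hne
      exact mem_Sc_of_mem_Ac hgen h2 ha hne
    refine ⟨fun x y => x = 1 ∨ ∃ i j : ℕ, i < p ∧ j < p ∧
      (phiH c)^[i] a₀ = y ∧ (phiH c)^[j] a₀ = x ∧ i ≤ j, ⟨?_, ?_, ?_, ?_⟩, ?_⟩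
    · -- refl
      intro a ha
      by_cases h1 : a = 1
      · exact Or.inl h1
      · obtain ⟨k, hk, hka⟩ := hidx a (hmemSc a ha h1)
        exact Or.inr ⟨k, k, hk, hk, hka, hka, le_refl k⟩
    · -- antisymm
      intro a ha b hb hab hba
      rcases hab with rfl | ⟨i, j, hi, hj, hib, hja, hij⟩
      · rcases hba with rfl | ⟨i', j', hi', hj', hia, hjb, hij'⟩
        · rfl
        · exact (hnot1 i' hia).elim
      · rcases hba with rfl | ⟨i', j', hi', hj', hia, hjb, hij'⟩
        · exact (hnot1 i hib).elim
        · have e1 : j = i' := hdist _ _ hj hi' (hja.trans hia.symm)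
          have e2 : i = j' := hdist _ _ hi hj' (hib.trans hjb.symm)
          have e3 : i = j := by omega
          rw [← hib, ← hja, e3]
    · -- trans
      intro a _ b _ d _ hab hbd
      rcases hab with rfl | ⟨i, j, hi, hj, hib, hja, hij⟩
      · exact Or.inl rfl
      · rcases hbd with rfl | ⟨i', j', hi', hj', hid, hjb, hij'⟩
        · exact (hnot1 i hib).elim
        · have e : i = j' := hdist _ _ hi hj' (hib.trans hjb.symm)
          exact Or.inr ⟨i', j, hi', hj, hid, hja, by omega⟩
    · -- total
      intro a ha b hb
      by_cases h1 : a = 1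
      · exact Or.inl (Or.inl h1)
      by_cases hb1 : b = 1
      · exact Or.inr (Or.inl hb1)
      obtain ⟨i, hi, hia⟩ := hidx a (hmemSc a ha h1)
      obtain ⟨j, hj, hjb⟩ := hidx b (hmemSc b hb hb1)
      rcases Nat.le_total j i with h | h
      · exact Or.inl (Or.inr ⟨j, i, hj, hi, hjb, hia, h⟩)
      · exact Or.inr (Or.inr ⟨i, j, hi, hj, hia, hjb, h⟩)
    · -- compatible order
      intro g hle hg2
      have hgc : g = c := by
        have h0 : lenA A (g⁻¹ * c) = 0 := by unfold leA at hle; omega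
        have h1 := eq_one_of_lenA_eq_zero hgen h0
        rw [inv_mul_eq_one] at h1
        exact h1
      rw [hgc]
      set w := (phiH c)^[p - 1] a₀ with hw
      have hwS : w ∈ Sc A c := hiter _
      have hwc : w⁻¹ * c = a₀ := by
        have hww : phiH c w = (phiH c)^[p] a₀ := by
          rw [hw, ← Function.iterate_succ_apply' (phiH c) (p - 1) a₀]
          congr 1
          omega
        rw [hp.2] at hww
        simpa [phiH] using hww
      refine ⟨[w, w⁻¹ * c], ⟨(mem_RedA_iff h2).2 ⟨w, hwS, rfl⟩, ?_⟩, ?_⟩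
      · unfold List.Chain'
        rw [List.isChain_pair]
        refine Or.inr ⟨0, p - 1, hp.1, by omega, by simpa using hwc.symm, rfl, by omega⟩
      · rintro l ⟨hlred, hlch⟩
        obtain ⟨a, haS, rfl⟩ := (mem_RedA_iff h2).1 hlred
        unfold List.Chain' at hlch
        rw [List.isChain_pair] at hlch
        rcases hlch with h1 | ⟨i, j, hi, hj, hiy, hjx, hij⟩
        · exact ((one_not_mem_Sc h2) (h1 ▸ haS)).elim
        · have hstep : (phiH c)^[j + 1] a₀ = a⁻¹ * c := by
            rw [Function.iterate_succ_apply', hjx]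
            rfl
          by_cases hjp : j + 1 < p
          · have heq := hdist i (j + 1) hi hjp (hiy.trans hstep.symm)
            exact absurd heq (by omega)
          · have hjeq : j = p - 1 := by omega
            have haw : a = w := by rw [← hjx, hjeq]
            rw [haw]
end
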